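/- For every integer l > 1 and each choice of sign ε ∈ {+1,−1}, the eigenspace S₄(l)_ε is spanned by the symmetrized classes xy(u,v)_ε = (xy(u,v) + ε·i(xy(u,v)))/2, over all pairs (u,v) ∈ (ℤ/lℤ)² with gcd(u,v,l) = 1. -/

import Mathlib

open scoped BigOperators

namespace MW

variable (l : ℕ)

/-- Index type for the basis symbols: `0 ↦ x²`, `1 ↦ xy`, `2 ↦ y²`. -/
abbrev Sym := Fin 3 × ZMod l × ZMod l

/-- The free ℂ-vector space on the symbols. -/
abbrev V := Sym l →₀ ℂ

/-- `gcd(u,v,l) = 1`. -/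
def copr (u v : ZMod l) : Prop := Nat.gcd (Nat.gcd (ZMod.val u) (ZMod.val v)) l = 1

instance (u v : ZMod l) : Decidable (copr l u v) := by unfold copr; infer_instance

noncomputable def X2 (u v : ZMod l) : V l := Finsupp.single (0, u, v) 1
noncomputable def XY (u v : ZMod l) : V l := Finsupp.single (1, u, v) 1
noncomputable def Y2 (u v : ZMod l) : V l := Finsupp.single (2, u, v) 1

/-- The relation subspace: the relations of Merel–Shokurov on coprime symbols,
together with the (dummy) basis vectors at non-coprime indices. -/
noncomputable def Rel : Submodule ℂ (V l) :=
  Submodule.span ℂ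
    ({ w | ∃ u v, ¬ copr l u v ∧ (w = X2 l u v ∨ w = XY l u v ∨ w = Y2 l u v) } ∪
     { w | ∃ u v, copr l u v ∧
        (w = X2 l u v + Y2 l v (-u) ∨
         w = XY l u v - XY l v (-u) ∨
         w = Y2 l u v + X2 l v (-u) ∨
         w = XY l v (-u - v) - XY l (-u - v) u + Y2 l (-u - v) u + X2 l u v - XY l u v) })

/-- The space of weight four modular symbols of level `l`. -/
abbrev M := V l ⧸ Rel l

noncomputable def x2 (u v : ZMod l) : M l := Submodule.Quotient.mk (X2 l u v)
noncomputable def xy (u v : ZMod l) : M l := Submodule.Quotient.mk (XY l u v)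
noncomputable def y2 (u v : ZMod l) : M l := Submodule.Quotient.mk (Y2 l u v)

/-- The class of `p₂·x²(u,v) + p₁·xy(u,v) + p₀·y²(u,v)` in `M l`. -/
noncomputable def pcl (p2 p1 p0 : ℂ) (u v : ZMod l) : M l :=
  p2 • x2 l u v + p1 • xy l u v + p0 • y2 l u v

/-- Reduction `ZMod l → ZMod (gcd(a,l))`. -/
noncomputable def castg (a : ZMod l) : ZMod l →+* ZMod (Nat.gcd (ZMod.val a) l) :=
  ZMod.castHom (Nat.gcd_dvd_right (ZMod.val a) l) (ZMod (Nat.gcd (ZMod.val a) l))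

/-- The functional on `V l` attached to the cusp data `(a, b)`. -/
noncomputable def psiV (a : ZMod l) (b : ZMod (Nat.gcd (ZMod.val a) l)) : V l →ₗ[ℂ] ℂ :=
  Finsupp.lift ℂ ℂ (Sym l) fun p =>
    if copr l p.2.1 p.2.2 then
      (if p.1 = 0 then
        ((if p.2.1 = a ∧ castg l a p.2.2 = b then (1 : ℂ) else 0) +
         (if p.2.1 = -a ∧ castg l a p.2.2 = -b then (1 : ℂ) else 0))
       else if p.1 = 2 then
        (-(if p.2.2 = a ∧ castg l a p.2.1 = -b then (1 : ℂ) else 0) -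
          (if p.2.2 = -a ∧ castg l a p.2.1 = b then (1 : ℂ) else 0))
       else 0)
    else 0

/-- The cuspidal subspace `S₄(l) ⊆ M₄(l)`: the (image in `M l` of the) intersection
of the kernels of all the functionals `ψ_{(a,b)}`. -/
noncomputable def S : Submodule ℂ (M l) :=
  Submodule.map (Rel l).mkQ
    (⨅ (a : ZMod l), ⨅ (b : ZMod (Nat.gcd (ZMod.val a) l)), ⨅ (_ : IsUnit b),
      LinearMap.ker (psiV l a b))

/-- The linear map on `V l` underlying the involution `i`:
`x²(u,v) ↦ x²(-u,v)`, `xy(u,v) ↦ -xy(-u,v)`, `y²(u,v) ↦ y²(-u,v)`. -/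
noncomputable def iV : V l →ₗ[ℂ] V l :=
  Finsupp.lift (V l) ℂ (Sym l) fun p =>
    if p.1 = 1 then -(Finsupp.single (1, -p.2.1, p.2.2) (1 : ℂ))
    else Finsupp.single (p.1, -p.2.1, p.2.2) (1 : ℂ)

end MW

namespace MWX

-- generic: congruence mod n preserves gcd with n
lemma igcd2_congr (n : ℕ) {x y : ℤ} (h : x ≡ y [ZMOD (n:ℤ)]) :
    Int.gcd x n = Int.gcd y n := by
  have hd : ∀ a b : ℤ, a ≡ b [ZMOD (n:ℤ)] → (Int.gcd a n : ℤ) ∣ Int.gcd b n := by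
    intro a b hab
    refine Int.dvd_coe_gcd ?_ (Int.gcd_dvd_right _ _)
    have h1 : (Int.gcd a n : ℤ) ∣ a := Int.gcd_dvd_left _ _
    have h2 : (Int.gcd a n : ℤ) ∣ (n:ℤ) := Int.gcd_dvd_right _ _
    have h3 : (n:ℤ) ∣ b - a := hab.dvd
    have : (Int.gcd a n : ℤ) ∣ b - a := h2.trans h3
    simpa using dvd_add h1 this
  exact Int.ofNat_dvd.mp (hd x y h) |>.antisymm (Int.ofNat_dvd.mp (hd y x h.symm))

lemma igcd3_congr (l : ℕ) {x y x' y' : ℤ} (hx : x ≡ x' [ZMOD (l:ℤ)]) (hy : y ≡ y' [ZMOD (l:ℤ)]) :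
    Int.gcd (Int.gcd x y) l = Int.gcd (Int.gcd x' y') l := by
  have key : ∀ a b a' : ℤ, a ≡ a' [ZMOD (l:ℤ)] → Int.gcd (Int.gcd a b) l = Int.gcd (Int.gcd a' b) l := by
    intro a b a' ha
    rw [Int.gcd_assoc, Int.gcd_assoc]
    have hdvd : ((Int.gcd b l : ℕ) : ℤ) ∣ (l:ℤ) := Int.gcd_dvd_right _ _
    have ha' : a ≡ a' [ZMOD ((Int.gcd b l : ℕ) : ℤ)] := ha.of_dvd hdvd
    exact igcd2_congr (Int.gcd b l) (by simpa using ha')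
  calc Int.gcd (Int.gcd x y) l = Int.gcd (Int.gcd x' y) l := key x y x' hx
    _ = Int.gcd (Int.gcd y x') l := by rw [Int.gcd_comm x' y]
    _ = Int.gcd (Int.gcd y' x') l := key y x' y' hy
    _ = Int.gcd (Int.gcd x' y') l := by rw [Int.gcd_comm y' x']

lemma igcd_eq_of {x y x' y' : ℤ} (h : ∀ d : ℤ, (d ∣ x ∧ d ∣ y) ↔ (d ∣ x' ∧ d ∣ y')) :
    Int.gcd x y = Int.gcd x' y' := by
  have h1 : (Int.gcd x y : ℤ) ∣ Int.gcd x' y' := by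
    obtain ⟨a, b⟩ := (h (Int.gcd x y)).mp ⟨Int.gcd_dvd_left _ _, Int.gcd_dvd_right _ _⟩
    exact Int.dvd_coe_gcd a b
  have h2 : (Int.gcd x' y' : ℤ) ∣ Int.gcd x y := by
    obtain ⟨a, b⟩ := (h (Int.gcd x' y')).mpr ⟨Int.gcd_dvd_left _ _, Int.gcd_dvd_right _ _⟩
    exact Int.dvd_coe_gcd a b
  exact (Int.ofNat_dvd.mp h1).antisymm (Int.ofNat_dvd.mp h2)

lemma igcd_add_mul (x y k : ℤ) : Int.gcd x (y + k * x) = Int.gcd x y := by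
  apply igcd_eq_of
  intro d
  constructor
  · rintro ⟨h1, h2⟩
    refine ⟨h1, ?_⟩
    have := dvd_sub h2 (h1.mul_left k)
    simpa using this
  · rintro ⟨h1, h2⟩
    exact ⟨h1, dvd_add h2 (h1.mul_left k)⟩

end MWX

set_option linter.unusedSectionVars false

namespace MWY
open MWX MW

variable (l : ℕ)

/-- gcd(u,l) -/
def g (u : ZMod l) : ℕ := Nat.gcd (ZMod.val u) l

variable [NeZero l]

lemma l_pos : 0 < l := Nat.pos_of_ne_zero (NeZero.ne l)

lemma g_pos (u : ZMod l) : 0 < g l u := Nat.gcd_pos_of_pos_right _ (l_pos l)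

lemma g_dvd_l (u : ZMod l) : g l u ∣ l := Nat.gcd_dvd_right _ _

lemma g_le_l (u : ZMod l) : g l u ≤ l := Nat.le_of_dvd (l_pos l) (g_dvd_l l u)

lemma g_dvd_val (u : ZMod l) : g l u ∣ ZMod.val u := Nat.gcd_dvd_left _ _

lemma valcast (u : ZMod l) : (((ZMod.val u : ℤ)) : ZMod l) = u := by
  simp [ZMod.natCast_val]

lemma val_congr {x : ℤ} {u : ZMod l} (h : (x : ZMod l) = u) :
    (ZMod.val u : ℤ) ≡ x [ZMOD (l:ℤ)] := by
  rw [← ZMod.intCast_eq_intCast_iff]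
  rw [valcast, h]

/-- interface lemma for copr via integer lifts -/
lemma copr_iff_int {u v : ZMod l} {x y : ℤ} (hx : (x : ZMod l) = u) (hy : (y : ZMod l) = v) :
    copr l u v ↔ Int.gcd (Int.gcd x y) l = 1 := by
  unfold copr
  rw [show Nat.gcd (Nat.gcd (ZMod.val u) (ZMod.val v)) l
      = Int.gcd (Int.gcd (ZMod.val u) (ZMod.val v)) l by
    rw [Int.gcd_natCast_natCast, Int.gcd_natCast_natCast]]
  rw [igcd3_congr l (val_congr l hx) (val_congr l hy)]

lemma copr_negneg {u v : ZMod l} (h : copr l u v) : copr l (-u) (-v) := by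
  rw [copr_iff_int l (valcast l u) (valcast l v)] at h
  rw [copr_iff_int l (x := -(ZMod.val u : ℤ)) (y := -(ZMod.val v : ℤ))
    (by push_cast; simp [ZMod.natCast_val]) (by push_cast; simp [ZMod.natCast_val])]
  rwa [Int.neg_gcd, Int.gcd_neg]

lemma inner_congr {x y x' y' : ℤ} (n : ℕ) (h : Int.gcd x y = Int.gcd x' y') :
    Int.gcd (Int.gcd x y) n = Int.gcd (Int.gcd x' y') n := by rw [h]

lemma copr_swapneg {u v : ZMod l} (h : copr l u v) : copr l v (-u) := by
  rw [copr_iff_int l (valcast l u) (valcast l v)] at h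
  rw [copr_iff_int l (x := (ZMod.val v : ℤ)) (y := -(ZMod.val u : ℤ))
    (valcast l v) (by push_cast; simp [ZMod.natCast_val])]
  rw [inner_congr l (x' := (ZMod.val u : ℤ)) (y' := (ZMod.val v : ℤ))
    (by rw [Int.gcd_neg, Int.gcd_comm])]
  exact h

lemma copr_addsmul {u v : ZMod l} (h : copr l u v) (k : ℕ) : copr l u (v + k • u) := by
  rw [copr_iff_int l (valcast l u) (valcast l v)] at h
  rw [copr_iff_int l (x := (ZMod.val u : ℤ)) (y := (ZMod.val v : ℤ) + k * (ZMod.val u : ℤ))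
    (valcast l u) (by push_cast; simp [ZMod.natCast_val, nsmul_eq_mul])]
  rwa [igcd_add_mul]

lemma copr_addleft {u v : ZMod l} (h : copr l u v) : copr l u (u + v) := by
  have := copr_addsmul l h 1
  simpa [add_comm] using this

lemma copr_sub {u v : ZMod l} (h : copr l u v) : copr l (-u - v) u := by
  rw [copr_iff_int l (valcast l u) (valcast l v)] at h
  rw [copr_iff_int l (x := -(ZMod.val u : ℤ) - (ZMod.val v : ℤ)) (y := (ZMod.val u : ℤ))
    (by push_cast; simp [ZMod.natCast_val]) (valcast l u)]
  rw [inner_congr l (x' := (ZMod.val u : ℤ)) (y' := (ZMod.val v : ℤ)) ?_]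
  · exact h
  · apply igcd_eq_of
    intro d
    constructor
    · rintro ⟨h1, h2⟩
      refine ⟨h2, ?_⟩
      have := dvd_add h1 h2
      rw [show -(ZMod.val u : ℤ) - (ZMod.val v : ℤ) + (ZMod.val u : ℤ) = -(ZMod.val v : ℤ) by ring] at this
      exact dvd_neg.mp this
    · rintro ⟨h1, h2⟩
      refine ⟨?_, h1⟩
      rw [show -(ZMod.val u : ℤ) - (ZMod.val v : ℤ) = -((ZMod.val u : ℤ) + (ZMod.val v : ℤ)) by ring]
      exact dvd_neg.mpr (dvd_add h1 h2)

lemma copr_w1 {u w : ZMod l} (h : copr l u w) : copr l w (-u - w) := by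
  rw [copr_iff_int l (valcast l u) (valcast l w)] at h
  rw [copr_iff_int l (x := (ZMod.val w : ℤ)) (y := -(ZMod.val u : ℤ) - (ZMod.val w : ℤ))
    (valcast l w) (by push_cast; simp [ZMod.natCast_val])]
  rw [inner_congr l (x' := (ZMod.val u : ℤ)) (y' := (ZMod.val w : ℤ)) ?_]
  · exact h
  · apply igcd_eq_of
    intro d
    constructor
    · rintro ⟨h1, h2⟩
      refine ⟨?_, h1⟩
      have := dvd_add h2 h1
      rw [show -(ZMod.val u : ℤ) - (ZMod.val w : ℤ) + (ZMod.val w : ℤ) = -(ZMod.val u : ℤ) by ring] at this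
      exact dvd_neg.mp this
    · rintro ⟨h1, h2⟩
      refine ⟨h2, ?_⟩
      rw [show -(ZMod.val u : ℤ) - (ZMod.val w : ℤ) = -((ZMod.val u : ℤ) + (ZMod.val w : ℤ)) by ring]
      exact dvd_neg.mpr (dvd_add h1 h2)

/-- copr is preserved by changing second argument within its congruence class mod g(u). -/
lemma copr_modg {u v w : ZMod l} (h : copr l u v)
    (hc : (ZMod.val v : ℤ) ≡ (ZMod.val w : ℤ) [ZMOD (g l u : ℤ)]) : copr l u w := by
  rw [copr_iff_int l (valcast l u) (valcast l v)] at h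
  rw [copr_iff_int l (valcast l u) (valcast l w)]
  rw [Int.gcd_comm (ZMod.val u : ℤ), Int.gcd_assoc] at h ⊢
  have hg : Int.gcd (ZMod.val u : ℤ) l = g l u := by
    rw [show ((ZMod.val u : ℕ) : ℤ) = ((ZMod.val u : ℕ) : ℤ) from rfl]
    rw [Int.gcd_natCast_natCast]
    rfl
  rw [hg] at h ⊢
  rwa [igcd2_congr (g l u) hc.symm]

/-- canonical data of a pair (one orientation) -/
def raw (u v : ZMod l) : ZMod l × ℤ := (u, (ZMod.val v : ℤ) % (g l u : ℤ))

def enc (p : ZMod l × ℤ) : ℤ := (ZMod.val p.1) * l + p.2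

/-- canonical data of a pair, symmetrized -/
def cls (u v : ZMod l) : ZMod l × ℤ :=
  if enc l (raw l u v) ≤ enc l (raw l (-u) (-v)) then raw l u v else raw l (-u) (-v)

lemma g_neg (u : ZMod l) : g l (-u) = g l u := by
  unfold g
  have h1 : (ZMod.val (-u) : ℤ) ≡ -(ZMod.val u : ℤ) [ZMOD (l:ℤ)] :=
    val_congr l (by push_cast; simp [ZMod.natCast_val])
  have := igcd2_congr l h1
  have h2 : Int.gcd (-(ZMod.val u : ℤ)) l = Int.gcd (ZMod.val u : ℤ) l := Int.neg_gcd
  have h3 : Int.gcd (ZMod.val (-u) : ℤ) l = Nat.gcd (ZMod.val (-u)) l := Int.gcd_natCast_natCast _ _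
  have h4 : Int.gcd (ZMod.val u : ℤ) l = Nat.gcd (ZMod.val u) l := Int.gcd_natCast_natCast _ _
  omega

lemma raw_eq_iff (u v w z : ZMod l) :
    raw l u v = raw l w z ↔ (u = w ∧ (ZMod.val v : ℤ) ≡ (ZMod.val z : ℤ) [ZMOD (g l w : ℤ)]) := by
  unfold raw
  rw [Prod.ext_iff]
  constructor
  · rintro ⟨h1, h2⟩
    subst h1
    refine ⟨rfl, ?_⟩
    simpa [Int.ModEq, Int.emod_emod_of_dvd] using h2
  · rintro ⟨h1, h2⟩
    subst h1
    exact ⟨rfl, by simpa [Int.ModEq] using h2⟩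

/-- second component of raw is in [0, g) -/
lemma raw_snd_bounds (u v : ZMod l) : 0 ≤ (raw l u v).2 ∧ (raw l u v).2 < (g l u : ℤ) := by
  unfold raw
  have hg : (0:ℤ) < (g l u : ℤ) := by exact_mod_cast g_pos l u
  exact ⟨Int.emod_nonneg _ (by omega), Int.emod_lt_of_pos _ hg⟩

lemma enc_inj {u v w z : ZMod l} (h : enc l (raw l u v) = enc l (raw l w z)) :
    raw l u v = raw l w z := by
  have b1 := raw_snd_bounds l u v
  have b2 := raw_snd_bounds l w z
  have hgu : (g l u : ℤ) ≤ l := by exact_mod_cast g_le_l l u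
  have hgw : (g l w : ℤ) ≤ l := by exact_mod_cast g_le_l l w
  unfold enc at h
  have hfst1 : (raw l u v).1 = u := rfl
  have hfst2 : (raw l w z).1 = w := rfl
  rw [hfst1, hfst2] at h
  set a := (ZMod.val u : ℤ) with ha
  set b := (ZMod.val w : ℤ) with hb
  set r := (raw l u v).2 with hr
  set s := (raw l w z).2 with hs
  have hrl : 0 ≤ r ∧ r < l := ⟨b1.1, lt_of_lt_of_le b1.2 hgu⟩
  have hsl : 0 ≤ s ∧ s < l := ⟨b2.1, lt_of_lt_of_le b2.2 hgw⟩
  have hab : a = b := by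
    rcases lt_trichotomy a b with hlt | heq | hgt
    · exfalso
      have h1 : a + 1 ≤ b := hlt
      have h2 : (a + 1) * l ≤ b * l := by
        apply mul_le_mul_of_nonneg_right h1 (by positivity)
      nlinarith
    · exact heq
    · exfalso
      have h1 : b + 1 ≤ a := hgt
      have h2 : (b + 1) * l ≤ a * l := by
        apply mul_le_mul_of_nonneg_right h1 (by positivity)
      nlinarith
  have huw : u = w := by
    apply ZMod.val_injective
    have : (ZMod.val u : ℤ) = (ZMod.val w : ℤ) := hab
    exact_mod_cast this
  have hrs : r = s := by nlinarith
  unfold raw at hr hs ⊢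
  rw [Prod.ext_iff]
  exact ⟨huw, by rw [← hr, ← hs]; exact hrs⟩

/-- negation transport for raw -/
lemma raw_neg {u v w z : ZMod l} (h : raw l u v = raw l w z) :
    raw l (-u) (-v) = raw l (-w) (-z) := by
  rw [raw_eq_iff] at h ⊢
  obtain ⟨h1, h2⟩ := h
  subst h1
  refine ⟨rfl, ?_⟩
  rw [g_neg]
  have hnv : (ZMod.val (-v) : ℤ) ≡ -(ZMod.val v : ℤ) [ZMOD (l:ℤ)] :=
    val_congr l (by push_cast; simp [ZMod.natCast_val])
  have hnz : (ZMod.val (-z) : ℤ) ≡ -(ZMod.val z : ℤ) [ZMOD (l:ℤ)] :=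
    val_congr l (by push_cast; simp [ZMod.natCast_val])
  have hdvd : ((g l u : ℕ) : ℤ) ∣ (l : ℤ) := Int.natCast_dvd_natCast.mpr (g_dvd_l l u)
  calc (ZMod.val (-v) : ℤ) ≡ -(ZMod.val v : ℤ) [ZMOD (g l u : ℤ)] := hnv.of_dvd hdvd
    _ ≡ -(ZMod.val z : ℤ) [ZMOD (g l u : ℤ)] := h2.neg
    _ ≡ (ZMod.val (-z) : ℤ) [ZMOD (g l u : ℤ)] := (hnz.of_dvd hdvd).symm

lemma min_comm' (A B : ZMod l × ℤ) (hinj : enc l A = enc l B → A = B) :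
    (if enc l A ≤ enc l B then A else B) = (if enc l B ≤ enc l A then B else A) := by
  split_ifs with h1 h2 h2
  · exact hinj (le_antisymm h1 h2)
  · rfl
  · rfl
  · omega

lemma cls_eq_iff (u v w z : ZMod l) :
    cls l u v = cls l w z ↔ (raw l u v = raw l w z ∨ raw l u v = raw l (-w) (-z)) := by
  constructor
  · intro h
    unfold cls at h
    split_ifs at h with h1 h2 h2
    · exact Or.inl h
    · exact Or.inr h
    · right
      have := raw_neg l h
      simpa using this
    · left
      have := raw_neg l h
      simpa using this
  · intro h
    rcases h with h | h
    · have h2 := raw_neg l h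
      unfold cls
      rw [h, h2]
    · have h2 := raw_neg l h
      simp only [neg_neg] at h2
      unfold cls
      rw [h, h2]
      exact min_comm' l (raw l (-w) (-z)) (raw l w z) (enc_inj l)

/-! ### The submodule W and relation elements -/

noncomputable def W : Submodule ℂ (MW.V l) :=
  Rel l ⊔ Submodule.span ℂ {w | ∃ u v, copr l u v ∧ w = XY l u v}

omit [NeZero l]

lemma rel1_mem {u v : ZMod l} (h : copr l u v) : X2 l u v + Y2 l v (-u) ∈ Rel l :=
  Submodule.subset_span (Or.inr ⟨u, v, h, Or.inl rfl⟩)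

lemma rel3_mem {u v : ZMod l} (h : copr l u v) : Y2 l u v + X2 l v (-u) ∈ Rel l :=
  Submodule.subset_span (Or.inr ⟨u, v, h, Or.inr (Or.inr (Or.inl rfl))⟩)

lemma rel4_mem {u v : ZMod l} (h : copr l u v) :
    XY l v (-u - v) - XY l (-u - v) u + Y2 l (-u - v) u + X2 l u v - XY l u v ∈ Rel l :=
  Submodule.subset_span (Or.inr ⟨u, v, h, Or.inr (Or.inr (Or.inr rfl))⟩)

lemma nc_mem {u v : ZMod l} (h : ¬ copr l u v) (i : Fin 3) :
    Finsupp.single ((i, u, v) : MW.Sym l) (1:ℂ) ∈ Rel l := by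
  apply Submodule.subset_span
  left
  fin_cases i
  · exact ⟨u, v, h, Or.inl rfl⟩
  · exact ⟨u, v, h, Or.inr (Or.inl rfl)⟩
  · exact ⟨u, v, h, Or.inr (Or.inr rfl)⟩

lemma rel_le_W : Rel l ≤ W l := le_sup_left

lemma xy_mem_W {u v : ZMod l} (h : copr l u v) : XY l u v ∈ W l :=
  Submodule.mem_sup_right <| Submodule.subset_span ⟨u, v, h, rfl⟩

/-- KeyB : X2(u,v) ≡ X2(-u,-v) mod Rel -/
lemma keyB [NeZero l] {u v : ZMod l} (h : copr l u v) : X2 l u v - X2 l (-u) (-v) ∈ Rel l := by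
  have h1 := rel1_mem l h
  have h3 := rel3_mem l (copr_swapneg l h)
  -- h3 : Y2 v (-u) + X2 (-u) (-v) ∈ Rel
  have h3' : Y2 l v (-u) + X2 l (-u) (-v) ∈ Rel l := by
    have : -(v : ZMod l) = -v := rfl
    simpa using h3
  have := sub_mem h1 h3'
  simpa using (by
    have heq : X2 l u v + Y2 l v (-u) - (Y2 l v (-u) + X2 l (-u) (-v))
        = X2 l u v - X2 l (-u) (-v) := by abel
    rw [heq] at this
    exact this)

/-- the translation step : X2(u,w) ≡ X2(u, u+w) mod W -/
lemma step [NeZero l] {u w : ZMod l} (h : copr l u w) : X2 l u w - X2 l u (u + w) ∈ W l := by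
  have h4 := rel4_mem l h
  have h3 := rel3_mem l (copr_sub l h)
  -- h3 : Y2 (-u-w) u + X2 u (-(-u-w)) ∈ Rel
  have hneg : -(-u - w) = u + w := by ring
  rw [hneg] at h3
  have hxy1 : XY l w (-u - w) ∈ W l := xy_mem_W l (copr_w1 l h)
  have hxy2 : XY l (-u - w) u ∈ W l := xy_mem_W l (copr_sub l h)
  have hxy3 : XY l u w ∈ W l := xy_mem_W l h
  have heq : X2 l u w - X2 l u (u + w)
      = (XY l w (-u - w) - XY l (-u - w) u + Y2 l (-u - w) u + X2 l u w - XY l u w)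
        - (Y2 l (-u - w) u + X2 l u (u + w))
        - XY l w (-u - w) + XY l (-u - w) u + XY l u w := by abel
  rw [heq]
  exact add_mem (add_mem (sub_mem (sub_mem (rel_le_W l h4) (rel_le_W l h3)) hxy1) hxy2) hxy3

lemma stepIter [NeZero l] {u v : ZMod l} (h : copr l u v) (k : ℕ) :
    X2 l u v - X2 l u (v + k • u) ∈ W l := by
  induction k with
  | zero => simp
  | succ n ih =>
    have hstep := step l (copr_addsmul l h n)
    have heq : X2 l u v - X2 l u (v + (n+1) • u)
        = (X2 l u v - X2 l u (v + n • u)) + (X2 l u (v + n • u) - X2 l u (u + (v + n • u))) := by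
      rw [show u + (v + n • u) = v + (n+1) • u by rw [succ_nsmul]; abel]
      abel
    rw [heq]
    exact add_mem ih hstep

/-- KeyA : congruent second components give congruent symbols -/
lemma keyA [NeZero l] {u v : ZMod l} (h : copr l u v) (v' : ZMod l)
    (hc : (ZMod.val v : ℤ) ≡ (ZMod.val v' : ℤ) [ZMOD (g l u : ℤ)]) :
    X2 l u v - X2 l u v' ∈ W l := by
  -- find k : ℕ with v' = v + k • u
  have hdvd : ((g l u : ℕ) : ℤ) ∣ ((ZMod.val v' : ℤ) - (ZMod.val v : ℤ)) := hc.dvd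
  obtain ⟨m, hm⟩ := hdvd
  -- Bezout
  have hbez := Nat.gcd_eq_gcd_ab (ZMod.val u) l
  -- in ZMod l : v' - v = (m * s) * u  where s = gcd_a
  set s : ℤ := Nat.gcdA (ZMod.val u) l with hs
  have hzz : v' - v = ((m * s : ℤ) : ZMod l) * u := by
    have h1 : v' - v = (((ZMod.val v' : ℤ) - (ZMod.val v : ℤ) : ℤ) : ZMod l) := by
      push_cast
      simp [ZMod.natCast_val]
    rw [h1, hm]
    have h2 : ((g l u : ℕ) : ℤ) = (ZMod.val u : ℤ) * s + l * Nat.gcdB (ZMod.val u) l := by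
      rw [hs]
      exact_mod_cast hbez
    rw [h2]
    push_cast
    simp [ZMod.natCast_val, ZMod.natCast_self]
    ring
  set z : ℤ := m * s with hz
  set k : ℕ := (z % l).toNat with hk
  have hzk : ((z : ℤ) : ZMod l) = ((k : ℕ) : ZMod l) := by
    have h0 : (0:ℤ) < l := by exact_mod_cast l_pos l
    have h1 : ((k : ℕ) : ℤ) = z % l := Int.toNat_of_nonneg (Int.emod_nonneg z (by omega))
    have h2 : z % (l:ℤ) = z - l * (z / l) := Int.emod_def z l
    have h3 : (((k:ℕ):ℤ) : ZMod l) = ((z:ℤ) : ZMod l) := by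
      rw [h1, h2]
      push_cast
      simp
    simpa using h3.symm
  have hv' : v' = v + k • u := by
    have h5 : v' - v = (k : ZMod l) * u := by rw [hzz, hzk]
    rw [nsmul_eq_mul]
    rw [← h5]
    ring
  have := stepIter l h k
  rwa [← hv'] at this

lemma keyAcast [NeZero l] (u v : ZMod l) :
    (ZMod.val v : ℤ) ≡ (ZMod.val ((((ZMod.val v : ℤ) % (g l u : ℤ)) : ℤ) : ZMod l) : ℤ)
      [ZMOD (g l u : ℤ)] := by
  set x := (ZMod.val v : ℤ) with hx
  set w := (((x % (g l u : ℤ)) : ℤ) : ZMod l) with hw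
  have hdvd : ((g l u : ℕ) : ℤ) ∣ (l : ℤ) := Int.natCast_dvd_natCast.mpr (g_dvd_l l u)
  have h1 : (ZMod.val w : ℤ) ≡ x % (g l u : ℤ) [ZMOD (l:ℤ)] := val_congr l rfl
  have h2 : (ZMod.val w : ℤ) ≡ x % (g l u : ℤ) [ZMOD (g l u : ℤ)] := h1.of_dvd hdvd
  have h3 : x % (g l u : ℤ) ≡ x [ZMOD (g l u : ℤ)] := Int.emod_emod_of_dvd x dvd_rfl
  exact ((h2.trans h3).symm)

lemma keyX2 [NeZero l] {u v : ZMod l} (h : copr l u v) :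
    X2 l u v - X2 l (cls l u v).1 (((cls l u v).2 : ℤ) : ZMod l) ∈ W l := by
  unfold cls
  split_ifs with h1
  · -- branch raw u v
    have := keyA l h ((((ZMod.val v : ℤ) % (g l u : ℤ)) : ℤ) : ZMod l) (keyAcast l u v)
    exact this
  · -- branch raw (-u) (-v)
    have hB := keyB l h
    have hA := keyA l (copr_negneg l h)
      ((((ZMod.val (-v) : ℤ) % (g l (-u) : ℤ)) : ℤ) : ZMod l) (keyAcast l (-u) (-v))
    have heq : X2 l u v - X2 l (raw l (-u) (-v)).1 (((raw l (-u) (-v)).2 : ℤ) : ZMod l)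
        = (X2 l u v - X2 l (-u) (-v))
          + (X2 l (-u) (-v) - X2 l (raw l (-u) (-v)).1 (((raw l (-u) (-v)).2 : ℤ) : ZMod l)) := by
      abel
    rw [heq]
    exact add_mem (rel_le_W l hB) hA

/-! ### the map phi and the section sec -/

noncomputable def phi : MW.V l →ₗ[ℂ] ((ZMod l × ℤ) →₀ ℂ) :=
  Finsupp.lift _ ℂ (MW.Sym l) fun p =>
    if copr l p.2.1 p.2.2 then
      if p.1 = 0 then Finsupp.single (cls l p.2.1 p.2.2) 1
      else if p.1 = 2 then -Finsupp.single (cls l p.2.2 (-p.2.1)) 1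
      else 0
    else 0

noncomputable def sec : ((ZMod l × ℤ) →₀ ℂ) →ₗ[ℂ] MW.V l :=
  Finsupp.lift _ ℂ _ fun p => X2 l p.1 ((p.2 : ℤ) : ZMod l)

lemma lift_single {N : Type} [AddCommGroup N] [Module ℂ N] (X : Type) (f : X → N) (p : X) (b : ℂ) :
    Finsupp.lift N ℂ X f (Finsupp.single p b) = b • f p := by
  simp

lemma phi_X2 {u v : ZMod l} (h : copr l u v) :
    phi l (X2 l u v) = Finsupp.single (cls l u v) 1 := by
  unfold phi X2
  rw [lift_single, if_pos h, if_pos rfl, one_smul]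

lemma phi_Y2 {u v : ZMod l} (h : copr l u v) :
    phi l (Y2 l u v) = -Finsupp.single (cls l v (-u)) 1 := by
  unfold phi Y2
  rw [lift_single, if_pos h, if_neg (by decide : ¬((2:Fin 3) = 0)), if_pos rfl, one_smul]

lemma phi_XY (u v : ZMod l) : phi l (XY l u v) = 0 := by
  unfold phi XY
  rw [lift_single]
  by_cases h : copr l u v
  · rw [if_pos h, if_neg (by decide : ¬((1:Fin 3) = 0)), if_neg (by decide : ¬((1:Fin 3) = 2)), smul_zero]
  · rw [if_neg h, smul_zero]

lemma phi_nc {u v : ZMod l} (h : ¬ copr l u v) (i : Fin 3) :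
    phi l (Finsupp.single ((i, u, v) : MW.Sym l) (1:ℂ)) = 0 := by
  unfold phi
  rw [lift_single]
  simp [h]

lemma sec_single (p : ZMod l × ℤ) :
    sec l (Finsupp.single p (1:ℂ)) = X2 l p.1 ((p.2 : ℤ) : ZMod l) := by
  unfold sec
  rw [lift_single]
  simp

/-- normal form : every vector is congruent mod W to sec (phi f) -/
lemma nf [NeZero l] (f : MW.V l) : f - sec l (phi l f) ∈ W l := by
  induction f using Finsupp.induction_linear with
  | zero => simp
  | add f g hf hg =>
    have : f + g - sec l (phi l (f + g)) = (f - sec l (phi l f)) + (g - sec l (phi l g)) := by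
      rw [map_add, map_add]
      abel
    rw [this]
    exact add_mem hf hg
  | single p b =>
    have hb : (Finsupp.single p b : MW.V l) = b • Finsupp.single p 1 := by
      rw [Finsupp.smul_single, smul_eq_mul, mul_one]
    rw [hb, map_smul, map_smul, ← smul_sub]
    apply Submodule.smul_mem
    obtain ⟨i, u, v⟩ := p
    by_cases h : copr l u v
    · fin_cases i
      · -- X2
        show X2 l u v - sec l (phi l (X2 l u v)) ∈ W l
        rw [phi_X2 l h, sec_single]
        exact keyX2 l h
      · -- XY
        show XY l u v - sec l (phi l (XY l u v)) ∈ W l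
        rw [phi_XY]
        simpa using xy_mem_W l h
      · -- Y2
        show Y2 l u v - sec l (phi l (Y2 l u v)) ∈ W l
        rw [phi_Y2 l h, map_neg, sec_single]
        have h3 := rel3_mem l h
        have hkey := keyX2 l (copr_swapneg l h)
        have heq : Y2 l u v - -X2 l (cls l v (-u)).1 (((cls l v (-u)).2 : ℤ) : ZMod l)
            = (Y2 l u v + X2 l v (-u))
              - (X2 l v (-u) - X2 l (cls l v (-u)).1 (((cls l v (-u)).2 : ℤ) : ZMod l)) := by
          abel
        rw [heq]
        exact sub_mem (rel_le_W l h3) hkey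
    · rw [phi_nc l h, map_zero, sub_zero]
      exact rel_le_W l (nc_mem l h i)

/-! ### comparing psiV with phi -/

lemma castg_eq_int [NeZero l] (a x : ZMod l) :
    castg l a x = (((ZMod.val x : ℤ)) : ZMod (Nat.gcd (ZMod.val a) l)) := by
  unfold castg
  rw [ZMod.castHom_apply, ← ZMod.natCast_val]
  push_cast
  rfl

lemma castg_inj [NeZero l] (a x y : ZMod l) :
    castg l a x = castg l a y ↔
      (ZMod.val x : ℤ) ≡ (ZMod.val y : ℤ) [ZMOD (g l a : ℤ)] := by
  rw [castg_eq_int, castg_eq_int, ZMod.intCast_eq_intCast_iff]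
  rfl

lemma condA [NeZero l] (u₀ v₀ u v : ZMod l) :
    (u = u₀ ∧ castg l u₀ v = castg l u₀ v₀) ↔ raw l u v = raw l u₀ v₀ := by
  rw [raw_eq_iff, castg_inj]

lemma condB [NeZero l] (u₀ v₀ u v : ZMod l) :
    (u = -u₀ ∧ castg l u₀ v = -(castg l u₀ v₀)) ↔ raw l u v = raw l (-u₀) (-v₀) := by
  rw [raw_eq_iff, g_neg, show -(castg l u₀ v₀) = castg l u₀ (-v₀) from (map_neg _ _).symm,
    castg_inj]

lemma indicator_lemma (P Q R : Prop) [Decidable P] [Decidable Q] [Decidable R]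
    (h1 : R → (P ↔ Q)) (h2 : ¬R → ¬(P ∧ Q)) :
    ((if P then (1:ℂ) else 0) + (if Q then 1 else 0))
      = (if R then 2 else 1) * (if P ∨ Q then 1 else 0) := by
  split_ifs <;> first | tauto | norm_num

lemma psi_eq [NeZero l] {u₀ v₀ : ZMod l} (h₀ : copr l u₀ v₀) :
    ∃ c : ℂ, c ≠ 0 ∧ ∀ f : MW.V l,
      psiV l u₀ (castg l u₀ v₀) f = c * (phi l f) (cls l u₀ v₀) := by
  classical
  refine ⟨if raw l u₀ v₀ = raw l (-u₀) (-v₀) then 2 else 1, by split_ifs <;> norm_num, ?_⟩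
  intro f
  induction f using Finsupp.induction_linear with
  | zero => simp
  | add f1 f2 hf1 hf2 => rw [map_add, map_add, hf1, hf2, Finsupp.add_apply]; ring
  | single p t =>
    obtain ⟨i, u, v⟩ := p
    unfold psiV phi
    rw [lift_single, lift_single, Finsupp.smul_apply, smul_eq_mul, smul_eq_mul]
    conv_rhs => rw [mul_left_comm]
    congr 1
    -- now the scalar identity for the single basis vector (i,u,v)
    show (if copr l u v then _ else (0:ℂ)) = _
    by_cases hc : copr l u v
    · rw [if_pos hc, if_pos hc]
      by_cases hi0 : i = 0
      · rw [if_pos hi0, if_pos hi0, Finsupp.single_apply]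
        have hA := condA l u₀ v₀ u v
        have hB := condB l u₀ v₀ u v
        have hC := cls_eq_iff l u v u₀ v₀
        simp only [hA, hB, hC]
        apply indicator_lemma
        · intro hR
          constructor
          · intro hP; exact hP.trans hR
          · intro hQ; exact hQ.trans hR.symm
        · rintro hR ⟨hP, hQ⟩
          exact hR (hP.symm.trans hQ)
      · rw [if_neg hi0, if_neg hi0]
        by_cases hi2 : i = 2
        · rw [if_pos hi2, if_pos hi2, Finsupp.neg_apply, Finsupp.single_apply]
          have hA' : (v = u₀ ∧ castg l u₀ u = -(castg l u₀ v₀)) ↔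
              raw l v (-u) = raw l u₀ v₀ := by
            rw [← condA l u₀ v₀ v (-u)]
            constructor
            · rintro ⟨h1, h2⟩
              exact ⟨h1, by rw [map_neg, h2, neg_neg]⟩
            · rintro ⟨h1, h2⟩
              refine ⟨h1, ?_⟩
              rw [map_neg] at h2
              rw [← neg_neg (castg l u₀ u), h2]
          have hB' : (v = -u₀ ∧ castg l u₀ u = castg l u₀ v₀) ↔
              raw l v (-u) = raw l (-u₀) (-v₀) := by
            rw [← condB l u₀ v₀ v (-u)]
            constructor
            · rintro ⟨h1, h2⟩
              exact ⟨h1, by rw [map_neg, h2]⟩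
            · rintro ⟨h1, h2⟩
              refine ⟨h1, ?_⟩
              rw [map_neg, neg_eq_iff_eq_neg, neg_neg] at h2
              rw [h2]
          have hC := cls_eq_iff l v (-u) u₀ v₀
          simp only [hA', hB', hC]
          have hind := indicator_lemma (raw l v (-u) = raw l u₀ v₀)
            (raw l v (-u) = raw l (-u₀) (-v₀)) (raw l u₀ v₀ = raw l (-u₀) (-v₀))
            (by intro hR; constructor
                · intro hP; exact hP.trans hR
                · intro hQ; exact hQ.trans hR.symm)
            (by rintro hR ⟨hP, hQ⟩; exact hR (hP.symm.trans hQ))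
          linear_combination -hind
        · rw [if_neg hi2, if_neg hi2]
          simp
    · rw [if_neg hc, if_neg hc]
      simp

lemma castg_unit [NeZero l] {u v : ZMod l} (h : copr l u v) : IsUnit (castg l u v) := by
  haveI : NeZero (Nat.gcd (ZMod.val u) l) := ⟨(g_pos l u).ne'⟩
  have hcast : castg l u v = ((ZMod.val v : ℕ) : ZMod (Nat.gcd (ZMod.val u) l)) := by
    rw [castg_eq_int]
    push_cast
    rfl
  rw [hcast, ZMod.isUnit_iff_coprime]
  unfold copr at h
  rw [Nat.gcd_comm (ZMod.val u) (ZMod.val v), Nat.gcd_assoc] at h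
  exact h

lemma phi_support [NeZero l] (f : MW.V l) (x : ZMod l × ℤ)
    (hx : ∀ u v : ZMod l, copr l u v → x ≠ cls l u v) : (phi l f) x = 0 := by
  induction f using Finsupp.induction_linear with
  | zero => simp
  | add f1 f2 h1 h2 => rw [map_add, Finsupp.add_apply, h1, h2, add_zero]
  | single p t =>
    obtain ⟨i, u, v⟩ := p
    unfold phi
    rw [lift_single, Finsupp.smul_apply]
    by_cases hc : copr l u v
    · rw [if_pos hc]
      by_cases hi0 : i = 0
      · rw [if_pos hi0, Finsupp.single_apply, if_neg (fun hh => hx u v hc hh.symm), smul_zero]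
      · rw [if_neg hi0]
        by_cases hi2 : i = 2
        · rw [if_pos hi2, Finsupp.neg_apply, Finsupp.single_apply,
            if_neg (fun hh => hx v (-u) (copr_swapneg l hc) hh.symm), neg_zero, smul_zero]
        · rw [if_neg hi2, Finsupp.zero_apply, smul_zero]
    · rw [if_neg hc, Finsupp.zero_apply, smul_zero]

theorem K_le_W [NeZero l] :
    (⨅ (a : ZMod l), ⨅ (b : ZMod (Nat.gcd (ZMod.val a) l)), ⨅ (_ : IsUnit b),
      LinearMap.ker (psiV l a b)) ≤ W l := by
  intro f hf
  simp only [Submodule.mem_iInf] at hf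
  have hphi : phi l f = 0 := by
    ext x
    rw [Finsupp.zero_apply]
    by_cases hx : ∃ u v : ZMod l, copr l u v ∧ x = cls l u v
    · obtain ⟨u, v, huv, rfl⟩ := hx
      obtain ⟨c, hc0, hc⟩ := psi_eq l huv
      have hker : psiV l u (castg l u v) f = 0 :=
        LinearMap.mem_ker.mp (hf u (castg l u v) (castg_unit l huv))
      have := hc f
      rw [hker] at this
      exact (mul_eq_zero.mp this.symm).resolve_left hc0
    · push_neg at hx
      exact phi_support l f x (fun u v h => hx u v h)
  have hnf := nf l f
  rwa [hphi, map_zero, sub_zero] at hnf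

theorem S_le_span [NeZero l] :
    S l ≤ Submodule.span ℂ {t : M l | ∃ u v : ZMod l, copr l u v ∧ t = xy l u v} := by
  have h1 : Submodule.map (Rel l).mkQ (W l)
      = Submodule.span ℂ {t : M l | ∃ u v : ZMod l, copr l u v ∧ t = xy l u v} := by
    unfold W
    rw [Submodule.map_sup]
    have h2 : Submodule.map (Rel l).mkQ (Rel l) = ⊥ := by
      rw [eq_bot_iff]
      rintro x ⟨w, hw, rfl⟩
      rw [Submodule.mem_bot, Submodule.mkQ_apply, Submodule.Quotient.mk_eq_zero]
      exact hw
    rw [h2, bot_sup_eq, Submodule.map_span]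
    congr 1
    ext t
    constructor
    · rintro ⟨w, ⟨u, v, huv, rfl⟩, rfl⟩
      exact ⟨u, v, huv, rfl⟩
    · rintro ⟨u, v, huv, rfl⟩
      exact ⟨XY l u v, ⟨u, v, huv, rfl⟩, rfl⟩
  exact le_trans (Submodule.map_mono (K_le_W l)) (le_of_eq h1)

lemma iV_XY (u v : ZMod l) : iV l (XY l u v) = -XY l (-u) v := by
  unfold iV XY
  rw [lift_single, if_pos rfl, one_smul]

lemma psiV_XY (a : ZMod l) (b : ZMod (Nat.gcd (ZMod.val a) l)) (u v : ZMod l) :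
    psiV l a b (XY l u v) = 0 := by
  unfold psiV XY
  rw [lift_single]
  by_cases hc : copr l u v
  · rw [if_pos hc, if_neg (by decide : ¬((1:Fin 3) = 0)), if_neg (by decide : ¬((1:Fin 3) = 2)),
      smul_zero]
  · rw [if_neg hc, smul_zero]

lemma XY_mem_K (u v : ZMod l) :
    XY l u v ∈ (⨅ (a : ZMod l), ⨅ (b : ZMod (Nat.gcd (ZMod.val a) l)), ⨅ (_ : IsUnit b),
      LinearMap.ker (psiV l a b)) := by
  simp only [Submodule.mem_iInf]
  intro a b _
  rw [LinearMap.mem_ker, psiV_XY]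

end MWY

open MWY in
open MW in
theorem stmt2 (l : ℕ) (hl : 1 < l)
    (hi : Rel l ≤ (Rel l).comap (iV l)) (ε : ℂ) (hε : ε = 1 ∨ ε = -1) :
    {m : M l | m ∈ S l ∧ Submodule.mapQ (Rel l) (Rel l) (iV l) hi m = ε • m} =
      ↑(Submodule.span ℂ {t : M l | ∃ u v : ZMod l, copr l u v ∧
          t = (2 : ℂ)⁻¹ • (xy l u v +
            ε • Submodule.mapQ (Rel l) (Rel l) (iV l) hi (xy l u v))}) := by
  haveI : NeZero l := ⟨by omega⟩
  have hε2 : ε * ε = 1 := by rcases hε with rfl | rfl <;> norm_num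
  set J : M l →ₗ[ℂ] M l := Submodule.mapQ (Rel l) (Rel l) (iV l) hi with hJdef
  have J_mk : ∀ x : MW.V l, J (Submodule.Quotient.mk x) = Submodule.Quotient.mk (iV l x) :=
    fun x => Submodule.mapQ_apply _ _ _ _
  have hJ1 : ∀ u v : ZMod l, J (xy l u v) = -xy l (-u) v := by
    intro u v
    rw [show xy l u v = Submodule.Quotient.mk (XY l u v) from rfl, J_mk, iV_XY,
      Submodule.Quotient.mk_neg]
    rfl
  set E : Submodule ℂ (M l) := S l ⊓ LinearMap.ker (J - ε • LinearMap.id) with hEdef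
  have hset : {m : M l | m ∈ S l ∧ J m = ε • m} = ↑E := by
    ext m
    simp only [Set.mem_setOf_eq, hEdef, Submodule.mem_inf, SetLike.mem_coe,
      LinearMap.mem_ker, LinearMap.sub_apply, LinearMap.smul_apply, LinearMap.id_apply,
      sub_eq_zero]
  rw [hset]
  rw [SetLike.coe_set_eq]
  apply le_antisymm
  · -- E ≤ span gens
    intro m hm
    obtain ⟨hm1, hm2⟩ := Submodule.mem_inf.mp hm
    rw [LinearMap.mem_ker, LinearMap.sub_apply, LinearMap.smul_apply, LinearMap.id_apply,
      sub_eq_zero] at hm2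
    have hm3 : m ∈ Submodule.span ℂ {t : M l | ∃ u v : ZMod l, copr l u v ∧ t = xy l u v} :=
      S_le_span l hm1
    set P : M l →ₗ[ℂ] M l := (2:ℂ)⁻¹ • (LinearMap.id + ε • J) with hPdef
    have hPm : P m = m := by
      rw [hPdef]
      simp only [LinearMap.smul_apply, LinearMap.add_apply, LinearMap.id_apply]
      rw [hm2, smul_smul, hε2, one_smul, ← two_smul ℂ m, smul_smul]
      norm_num
    have h4 : P m ∈ Submodule.map P
        (Submodule.span ℂ {t : M l | ∃ u v : ZMod l, copr l u v ∧ t = xy l u v}) :=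
      Submodule.mem_map_of_mem hm3
    rw [Submodule.map_span] at h4
    rw [← hPm]
    refine Submodule.span_mono ?_ h4
    rintro _ ⟨t, ⟨u, v, huv, rfl⟩, rfl⟩
    refine ⟨u, v, huv, ?_⟩
    rw [hPdef]
    simp only [LinearMap.smul_apply, LinearMap.add_apply, LinearMap.id_apply]
  · -- span gens ≤ E
    rw [Submodule.span_le]
    rintro t ⟨u, v, huv, rfl⟩
    rw [SetLike.mem_coe, hEdef, Submodule.mem_inf]
    constructor
    · -- membership in S
      show _ ∈ S l
      unfold MW.S
      rw [Submodule.mem_map]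
      refine ⟨(2:ℂ)⁻¹ • (XY l u v + ε • iV l (XY l u v)), ?_, ?_⟩
      · apply Submodule.smul_mem
        apply add_mem (XY_mem_K l u v)
        apply Submodule.smul_mem
        rw [iV_XY]
        exact neg_mem (XY_mem_K l (-u) v)
      · rw [map_smul, map_add, map_smul]
        rw [Submodule.mkQ_apply, Submodule.mkQ_apply]
        rw [show Submodule.Quotient.mk (XY l u v) = xy l u v from rfl]
        rw [show (Submodule.Quotient.mk (iV l (XY l u v)) : M l) = J (xy l u v) from
          (J_mk (XY l u v)).symm]
    · -- eigenvector property
      rw [LinearMap.mem_ker, LinearMap.sub_apply, LinearMap.smul_apply, LinearMap.id_apply,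
        sub_eq_zero]
      have hJ2 : J (xy l (-u) v) = -xy l u v := by
        rw [hJ1, neg_neg]
      rw [hJ1, map_smul, map_add, map_smul, map_neg, hJ2, neg_neg]
      rw [hJ1, smul_comm ε ((2:ℂ)⁻¹), smul_add ε, smul_smul ε ε, hε2, one_smul]
      rw [smul_add ((2:ℂ)⁻¹), smul_add ((2:ℂ)⁻¹)]
      abel
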